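/- Let (F, ≺) be an IS-family and Pr_x the set of principal elements (those S with hat(S) ≠ ∅) of excess at most x. Then |Pr_x| ≤ 2^{x+1} · |sm(F)|. -/

import Mathlib

set_option maxHeartbeats 1000000


/-- A family of subsets of a finite set `V` with a strict partial order. -/
structure ISFamily (V : Type*) [DecidableEq V] [Fintype V] where
  F : Finset (Finset V)
  prec : Finset V → Finset V → Prop
  prec_trans : ∀ {a b c : Finset V}, prec a b → prec b c → prec a c
  prec_irrefl : ∀ a : Finset V, ¬ prec a a

namespace ISFamily

variable {V : Type*} [DecidableEq V] [Fintype V] (Fam : ISFamily V)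

/-- The immediate predecessors of `S` in the family. -/
def Pred (S : Finset V) : Set (Finset V) :=
  {S' | S' ∈ Fam.F ∧ Fam.prec S' S ∧
    ¬ ∃ S'' ∈ Fam.F, Fam.prec S' S'' ∧ Fam.prec S'' S}

/-- `S'` covers `v` if some member of the family preceding `S'` contains `v` while
`S'` does not. -/
def Covers (S' : Finset V) (v : V) : Prop :=
  ∃ S'' ∈ Fam.F, Fam.prec S'' S' ∧ v ∈ S'' ∧ v ∉ S'

/-- The visible set of `S`: vertices belonging to some immediate predecessor of `S`
and not covered by any immediate predecessor of `S`. -/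
def Vis (S : Finset V) : Set V :=
  {v | (∃ S' ∈ Fam.Pred S, v ∈ S') ∧ ∀ S' ∈ Fam.Pred S, ¬ Fam.Covers S' v}

/-- `hat S = S \ ⋃_{S' ≺ S} S'`. -/
def hat (S : Finset V) : Set V :=
  ↑S \ ⋃ S' ∈ {S' | S' ∈ Fam.F ∧ Fam.prec S' S}, (↑S' : Set V)

/-- `W` is a witness of `v` w.r.t. `S`: a minimal element of the family with
`S ≺ W` and `v ∉ W`. -/
def IsWitness (S : Finset V) (v : V) (W : Finset V) : Prop :=
  W ∈ Fam.F ∧ Fam.prec S W ∧ v ∉ W ∧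
    ∀ W' ∈ Fam.F, Fam.prec S W' → v ∉ W' → ¬ Fam.prec W' W

/-- The axioms making `(F, ≺)` an IS-family with smallest element `sm`. -/
structure IsIS (sm : Finset V) : Prop where
  sm_mem : sm ∈ Fam.F
  SE : ∀ S ∈ Fam.F, S ≠ sm → Fam.prec sm S
  SM : ∀ S₁ ∈ Fam.F, ∀ S₂ ∈ Fam.F, Fam.prec S₁ S₂ → S₁.card < S₂.card
  SW : ∀ S ∈ Fam.F, ∀ v ∈ S, ∀ W₁ W₂ : Finset V,
    Fam.IsWitness S v W₁ → Fam.IsWitness S v W₂ → W₁ = W₂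
  TE : ∀ S₁ ∈ Fam.F, ∀ S₂ ∈ Fam.F, ∀ S₃ ∈ Fam.F,
    Fam.prec S₁ S₂ → Fam.prec S₂ S₃ → ∀ v ∈ S₁, v ∉ S₂ → v ∉ S₃
  LVS : ∀ S ∈ Fam.F, ∀ S' ∈ Fam.Pred S, S'.card ≤ (Fam.Vis S).ncard
  DVS : ∀ S ∈ Fam.F, S ≠ sm → ¬ (Fam.Vis S ⊆ ↑S)

/-- The excess of `S` relative to the smallest element `sm`. -/
def ex (sm S : Finset V) : ℕ := S.card - sm.card

/-- The members of the family of excess at most `x`. -/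
def Ex (sm : Finset V) (x : ℕ) : Finset (Finset V) :=
  Fam.F.filter (fun S => ex sm S ≤ x)

/-- The `x`-hat of `S`: elements of `hat S` not excluded by any member of `E_x`
succeeding `S`. -/
def hatx (sm : Finset V) (x : ℕ) (S : Finset V) : Set V :=
  {v ∈ Fam.hat S | ¬ ∃ S' ∈ Fam.Ex sm x, Fam.prec S S' ∧ v ∉ S'}

/-- `M(x) = Σ_{S ∈ E_x} 2^{x - ex(S)} · |hat_x(S)|`. -/
noncomputable def M (sm : Finset V) (x : ℕ) : ℕ :=
  ∑ S ∈ Fam.Ex sm x, 2 ^ (x - ex sm S) * (Fam.hatx sm x S).ncard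

end ISFamily

/-! ### Auxiliary development -/

namespace ISP
open ISFamily

variable {V : Type*} [DecidableEq V] [Fintype V] (Fam : ISFamily V) (sm : Finset V)

open Classical in
/-- `hat` as a Finset. -/
noncomputable def hatF (S : Finset V) : Finset V :=
  S.filter (fun v => ∀ U ∈ Fam.F, Fam.prec U S → v ∉ U)

open Classical in
/-- Tokens: pairs `(U, w)` with `U ∈ F` and `w ∈ hat U`. -/
noncomputable def Tok : Finset (Finset V × V) :=
  (Fam.F ×ˢ Finset.univ).filter (fun p => p.2 ∈ hatF Fam p.1)

/-- A token is dead at level `x` if some member of excess ≤ x above its owner omits it. -/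
def DeadP (x : ℕ) (τ : Finset V × V) : Prop :=
  ∃ K ∈ Fam.F, Fam.prec τ.1 K ∧ τ.2 ∉ K ∧ K.card ≤ sm.card + x

open Classical in
noncomputable def Alive (l : ℕ) : Finset (Finset V × V) :=
  (Tok Fam).filter (fun τ => τ.1.card ≤ sm.card + l ∧ ¬ DeadP Fam sm l τ)

open Classical in
noncomputable def DeadT (x : ℕ) : Finset (Finset V × V) :=
  (Tok Fam).filter (fun τ => DeadP Fam sm x τ)

/-- The potential. -/
noncomputable def Npot (l : ℕ) : ℕ :=
  ∑ τ ∈ Alive Fam sm l, 2 ^ (sm.card + l - τ.1.card)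

open Classical in
noncomputable def VisF (S : Finset V) : Finset V := Finset.univ.filter (· ∈ Fam.Vis S)

open Classical in
noncomputable def Bset (S : Finset V) : Finset V := (VisF Fam S).filter (fun w => w ∉ S)

lemma mem_hatF {S : Finset V} {v : V} :
    v ∈ hatF Fam S ↔ v ∈ S ∧ ∀ U ∈ Fam.F, Fam.prec U S → v ∉ U := by
  classical simp [hatF]

lemma mem_Tok {τ : Finset V × V} :
    τ ∈ Tok Fam ↔ τ.1 ∈ Fam.F ∧ τ.2 ∈ hatF Fam τ.1 := by
  classical simp [Tok]

lemma mem_VisF {S : Finset V} {v : V} : v ∈ VisF Fam S ↔ v ∈ Fam.Vis S := by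
  classical simp [VisF]

lemma mem_Bset {S : Finset V} {v : V} :
    v ∈ Bset Fam S ↔ v ∈ Fam.Vis S ∧ v ∉ S := by
  classical simp [Bset, mem_VisF]

lemma vis_ncard (S : Finset V) : (Fam.Vis S).ncard = (VisF Fam S).card := by
  classical
  have h : (↑(VisF Fam S) : Set V) = Fam.Vis S := by
    ext v; simp [mem_VisF]
  rw [← h, Set.ncard_coe_finset]


lemma mem_Alive {l : ℕ} {τ : Finset V × V} :
    τ ∈ Alive Fam sm l ↔ (τ.1 ∈ Fam.F ∧ τ.2 ∈ hatF Fam τ.1) ∧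
      τ.1.card ≤ sm.card + l ∧ ¬ DeadP Fam sm l τ := by
  classical
  rw [Alive, Finset.mem_filter, mem_Tok]

lemma mem_DeadT {x : ℕ} {τ : Finset V × V} :
    τ ∈ DeadT Fam sm x ↔ (τ.1 ∈ Fam.F ∧ τ.2 ∈ hatF Fam τ.1) ∧ DeadP Fam sm x τ := by
  classical
  rw [DeadT, Finset.mem_filter, mem_Tok]

variable {Fam sm}

section Basic
variable (hIS : Fam.IsIS sm)
include hIS

lemma card_ge {S : Finset V} (hS : S ∈ Fam.F) : sm.card ≤ S.card := by
  by_cases h : S = sm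
  · subst h; exact le_rfl
  · exact le_of_lt (hIS.SM sm hIS.sm_mem S hS (hIS.SE S hS h))

lemma eq_sm_of_card_le {S : Finset V} (hS : S ∈ Fam.F) (h : S.card ≤ sm.card) : S = sm := by
  by_contra hne
  exact absurd (hIS.SM sm hIS.sm_mem S hS (hIS.SE S hS hne)) (by omega)

lemma DeadP_mono {x y : ℕ} (hxy : x ≤ y) {τ : Finset V × V} (h : DeadP Fam sm x τ) :
    DeadP Fam sm y τ := by
  obtain ⟨K, hK, h1, h2, h3⟩ := h
  exact ⟨K, hK, h1, h2, by omega⟩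

/-- Between any strict predecessor and S there is an immediate predecessor. -/
lemma exists_pred_between {U S : Finset V} (hU : U ∈ Fam.F) (hS : S ∈ Fam.F)
    (hUS : Fam.prec U S) :
    ∃ T, T ∈ Fam.Pred S ∧ (T = U ∨ Fam.prec U T) ∧ U.card ≤ T.card := by
  classical
  set D : Finset (Finset V) :=
    Fam.F.filter (fun Z => Fam.prec Z S ∧ (Z = U ∨ Fam.prec U Z)) with hD
  have hUD : U ∈ D := by simp [hD, hU, hUS]
  obtain ⟨T, hTD, hmax⟩ := Finset.exists_max_image D (fun Z => Z.card) ⟨U, hUD⟩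
  simp only [hD, Finset.mem_filter] at hTD
  refine ⟨T, ⟨hTD.1, hTD.2.1, ?_⟩, hTD.2.2, ?_⟩
  · rintro ⟨S'', hS''F, hTS'', hS''S⟩
    have hS''D : S'' ∈ D := by
      refine Finset.mem_filter.mpr ⟨hS''F, hS''S, Or.inr ?_⟩
      rcases hTD.2.2 with h | h
      · rwa [h] at hTS''
      · exact Fam.prec_trans h hTS''
    have := hmax S'' hS''D
    have := hIS.SM T hTD.1 S'' hS''F hTS''
    omega
  · exact hmax U hUD

/-- Minimal-witness existence below a given candidate. -/
lemma witness_min {U C : Finset V} (hU : U ∈ Fam.F) (hC : C ∈ Fam.F)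
    (hUC : Fam.prec U C) {w : V} (hwC : w ∉ C) :
    ∃ W, Fam.IsWitness U w W ∧ (W = C ∨ Fam.prec W C) ∧ W.card ≤ C.card := by
  classical
  set D : Finset (Finset V) :=
    Fam.F.filter (fun Z => Fam.prec U Z ∧ w ∉ Z ∧ (Z = C ∨ Fam.prec Z C)) with hD
  have hCD : C ∈ D := by simp [hD, hC, hUC, hwC]
  obtain ⟨W, hWD, hmin⟩ := Finset.exists_min_image D (fun Z => Z.card) ⟨C, hCD⟩
  simp only [hD, Finset.mem_filter] at hWD
  refine ⟨W, ⟨hWD.1, hWD.2.1, hWD.2.2.1, ?_⟩, hWD.2.2.2, hmin C hCD⟩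
  intro W' hW'F hUW' hwW' hW'W
  have hW'D : W' ∈ D := by
    refine Finset.mem_filter.mpr ⟨hW'F, hUW', hwW', Or.inr ?_⟩
    rcases hWD.2.2.2 with h | h
    · rwa [← h]
    · exact Fam.prec_trans hW'W h
  have := hmin W' hW'D
  have := hIS.SM W' hW'F W hWD.1 hW'W
  omega

/-- KEY: if `w` is visible at `S` but not in `S`, then `S` is a witness of `(U, w)`
for every `U ≺ S` containing `w`. -/
lemma witness_of_vis {S : Finset V} (hS : S ∈ Fam.F) {w : V}
    (hwVis : w ∈ Fam.Vis S) (hwS : w ∉ S) {U : Finset V} (hU : U ∈ Fam.F)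
    (hUS : Fam.prec U S) (hwU : w ∈ U) : Fam.IsWitness U w S := by
  refine ⟨hS, hUS, hwS, ?_⟩
  intro W' hW'F hUW' hwW' hW'S
  obtain ⟨T₂, hT₂Pred, hle, _⟩ := exists_pred_between hIS hW'F hS hW'S
  have hT₂F : T₂ ∈ Fam.F := hT₂Pred.1
  have hT₂S : Fam.prec T₂ S := hT₂Pred.2.1
  have hwT₂ : w ∉ T₂ := by
    rcases hle with h | h
    · rwa [h]
    · exact hIS.TE U hU W' hW'F T₂ hT₂F hUW' h w hwU hwW'
  have hUT₂ : Fam.prec U T₂ := by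
    rcases hle with h | h
    · rwa [h]
    · exact Fam.prec_trans hUW' h
  exact hwVis.2 T₂ hT₂Pred ⟨U, hU, hUT₂, hwU, hwT₂⟩

/-- minimal set below T containing w lies in the hat. -/
lemma min_hat_below {T S : Finset V} (hT : T ∈ Fam.F) {w : V} (hwT : w ∈ T)
    (hTS : Fam.prec T S) :
    ∃ U ∈ Fam.F, w ∈ hatF Fam U ∧ Fam.prec U S ∧ U.card ≤ T.card := by
  classical
  set D : Finset (Finset V) :=
    Fam.F.filter (fun Z => w ∈ Z ∧ (Z = T ∨ Fam.prec Z T)) with hD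
  have hTD : T ∈ D := by simp [hD, hT, hwT]
  obtain ⟨U, hUD, hmin⟩ := Finset.exists_min_image D (fun Z => Z.card) ⟨T, hTD⟩
  simp only [hD, Finset.mem_filter] at hUD
  have hUT : U = T ∨ Fam.prec U T := hUD.2.2
  have hUS : Fam.prec U S := by
    rcases hUT with h | h
    · rwa [h]
    · exact Fam.prec_trans h hTS
  refine ⟨U, hUD.1, (mem_hatF Fam).mpr ⟨hUD.2.1, ?_⟩, hUS, hmin T hTD⟩
  intro P hPF hPU hwP
  have hPD : P ∈ D := by
    refine Finset.mem_filter.mpr ⟨hPF, hwP, Or.inr ?_⟩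
    rcases hUT with h | h
    · rwa [← h]
    · exact Fam.prec_trans hPU h
  have := hmin P hPD
  have := hIS.SM P hPF U hUD.1 hPU
  omega

lemma Bset_nonempty {S : Finset V} (hS : S ∈ Fam.F) (hne : S ≠ sm) :
    (Bset Fam S).Nonempty := by
  obtain ⟨w, hwVis, hwS⟩ := Set.not_subset.mp (hIS.DVS S hS hne)
  exact ⟨w, (mem_Bset Fam).mpr ⟨hwVis, hwS⟩⟩

/-- hat and Vis∩S fit disjointly in S; Vis = Vis∩S + B. -/
lemma hat_vis_card {S : Finset V} (hS : S ∈ Fam.F) :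
    (hatF Fam S).card + (VisF Fam S).card ≤ S.card + (Bset Fam S).card := by
  classical
  have hsplit : ((VisF Fam S).filter (fun w => w ∈ S)).card + (Bset Fam S).card
      = (VisF Fam S).card := by
    have := Finset.card_filter_add_card_filter_not
      (s := VisF Fam S) (p := fun w => w ∈ S)
    simpa [Bset] using this
  have hdisj : Disjoint (hatF Fam S) ((VisF Fam S).filter (fun w => w ∈ S)) := by
    rw [Finset.disjoint_left]
    intro v hv hv'
    have hv1 := (mem_hatF Fam).mp hv
    have hv2 : v ∈ Fam.Vis S := (mem_VisF Fam).mp (Finset.mem_filter.mp hv').1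
    obtain ⟨T', hT'Pred, hvT'⟩ := hv2.1
    exact hv1.2 T' hT'Pred.1 hT'Pred.2.1 hvT'
  have hsub : hatF Fam S ∪ (VisF Fam S).filter (fun w => w ∈ S) ⊆ S := by
    intro v hv
    rcases Finset.mem_union.mp hv with h | h
    · exact ((mem_hatF Fam).mp h).1
    · exact (Finset.mem_filter.mp h).2
  have := Finset.card_le_card hsub
  rw [Finset.card_union_of_disjoint hdisj] at this
  omega

/-- Full token package for each `w ∈ B(S')`. -/
lemma token_exists {S' : Finset V} (hS' : S' ∈ Fam.F) {w : V} (hw : w ∈ Bset Fam S') :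
    ∃ U, U ∈ Fam.F ∧ w ∈ hatF Fam U ∧ Fam.prec U S' ∧ Fam.IsWitness U w S' ∧
      (hatF Fam S').card + U.card ≤ S'.card + (Bset Fam S').card := by
  obtain ⟨hwVis, hwS'⟩ := (mem_Bset Fam).mp hw
  obtain ⟨T, hTPred, hwT⟩ := hwVis.1
  obtain ⟨U, hUF, hwhat, hUS', hUcard⟩ := min_hat_below hIS hTPred.1 hwT hTPred.2.1
  have hwU : w ∈ U := ((mem_hatF Fam).mp hwhat).1
  have hLVS : T.card ≤ (VisF Fam S').card := by
    rw [← vis_ncard]; exact hIS.LVS S' hS' T hTPred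
  have := hat_vis_card hIS hS'
  exact ⟨U, hUF, hwhat, hUS', witness_of_vis hIS hS' hwVis hwS' hUF hUS' hwU, by omega⟩

end Basic

open Classical in
/-- Choice of the token for a pair `(S', w)`. -/
noncomputable def pickU (Fm : ISFamily V) (S' : Finset V) (w : V) : Finset V :=
  if h : ∃ U, U ∈ Fm.F ∧ w ∈ hatF Fm U ∧ Fm.prec U S' ∧ Fm.IsWitness U w S' ∧
      (hatF Fm S').card + U.card ≤ S'.card + (Bset Fm S').card
  then h.choose else ∅

lemma pickU_spec (hIS : Fam.IsIS sm) {S' : Finset V} (hS' : S' ∈ Fam.F) {w : V}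
    (hw : w ∈ Bset Fam S') :
    (pickU Fam S' w) ∈ Fam.F ∧ w ∈ hatF Fam (pickU Fam S' w) ∧
    Fam.prec (pickU Fam S' w) S' ∧ Fam.IsWitness (pickU Fam S' w) w S' ∧
      (hatF Fam S').card + (pickU Fam S' w).card ≤ S'.card + (Bset Fam S').card := by
  have h := token_exists hIS hS' hw
  rw [pickU, dif_pos h]
  exact h.choose_spec

section Steps
variable (hIS : Fam.IsIS sm)
include hIS

/-- Per-set charging inequality. -/
lemma charge_arith {S' : Finset V} (hS' : S' ∈ Fam.F) (hne : S' ≠ sm) :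
    (hatF Fam S').card ≤ ∑ w ∈ Bset Fam S', 2 ^ (S'.card - (pickU Fam S' w).card) := by
  classical
  obtain ⟨w₀, hw₀⟩ := Bset_nonempty hIS hS' hne
  have hcard : ∀ w ∈ Bset Fam S', (pickU Fam S' w).card < S'.card := by
    intro w hw
    obtain ⟨hUF, _, hUS', _, _⟩ := pickU_spec hIS hS' hw
    exact hIS.SM _ hUF S' hS' hUS'
  rw [← Finset.add_sum_erase (Bset Fam S')
    (fun w => 2 ^ (S'.card - (pickU Fam S' w).card)) hw₀]

  have h3 : S'.card - (pickU Fam S' w₀).card + 1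
      ≤ 2 ^ (S'.card - (pickU Fam S' w₀).card) := Nat.lt_two_pow_self
  have hconst : ((Bset Fam S').erase w₀).card * 2
      ≤ ∑ w ∈ (Bset Fam S').erase w₀, 2 ^ (S'.card - (pickU Fam S' w).card) := by
    calc ((Bset Fam S').erase w₀).card * 2
        = ∑ _w ∈ (Bset Fam S').erase w₀, 2 := by rw [Finset.sum_const, smul_eq_mul]
    _ ≤ _ := by
        refine Finset.sum_le_sum ?_
        intro w hw
        have := hcard w (Finset.mem_of_mem_erase hw)
        calc (2:ℕ) = 2 ^ 1 := rfl
        _ ≤ _ := Nat.pow_le_pow_right (by norm_num) (by omega)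
  have herase : ((Bset Fam S').erase w₀).card = (Bset Fam S').card - 1 :=
    Finset.card_erase_of_mem hw₀
  have hBpos : 1 ≤ (Bset Fam S').card := Finset.card_pos.mpr ⟨w₀, hw₀⟩
  obtain ⟨_, _, _, _, hineq⟩ := pickU_spec hIS hS' hw₀
  have := hcard w₀ hw₀
  omega


/-- The main potential step. -/
lemma Npot_succ (l : ℕ) : Npot Fam sm (l + 1) ≤ 2 * Npot Fam sm l := by
  classical
  set Fresh := (Alive Fam sm l).filter (fun τ => DeadP Fam sm (l + 1) τ) with hFresh
  set NewS := Fam.F.filter (fun Z => Z.card = sm.card + l + 1) with hNewS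
  set Aold := (Alive Fam sm (l + 1)).filter (fun τ => τ.1.card ≤ sm.card + l) with hAold
  set Anew := (Alive Fam sm (l + 1)).filter (fun τ => ¬ τ.1.card ≤ sm.card + l) with hAnew
  have hsplit : ∑ τ ∈ Aold, 2 ^ (sm.card + (l + 1) - τ.1.card)
      + ∑ τ ∈ Anew, 2 ^ (sm.card + (l + 1) - τ.1.card) = Npot Fam sm (l + 1) :=
    Finset.sum_filter_add_sum_filter_not _ _ _
  -- the old part
  have hAoldsub : Aold ⊆ Alive Fam sm l := by
    intro τ hτ
    rw [hAold, Finset.mem_filter, mem_Alive Fam sm] at hτ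
    refine (mem_Alive Fam sm).mpr ⟨hτ.1.1, hτ.2, fun hd => hτ.1.2.2 (DeadP_mono hIS (by omega) hd)⟩
  have hFreshsub : Fresh ⊆ Alive Fam sm l := Finset.filter_subset _ _
  have hdisj : Disjoint Aold Fresh := by
    rw [Finset.disjoint_left]
    intro τ hτ hτ'
    rw [hAold, Finset.mem_filter, mem_Alive Fam sm] at hτ
    rw [hFresh, Finset.mem_filter] at hτ'
    exact hτ.1.2.2 hτ'.2
  have hold2 : ∑ τ ∈ Aold, 2 ^ (sm.card + l - τ.1.card)
      + ∑ τ ∈ Fresh, 2 ^ (sm.card + l - τ.1.card) ≤ Npot Fam sm l := by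
    rw [← Finset.sum_union hdisj]
    exact Finset.sum_le_sum_of_subset (Finset.union_subset hAoldsub hFreshsub)
  have hold1 : ∑ τ ∈ Aold, 2 ^ (sm.card + (l + 1) - τ.1.card)
      = 2 * ∑ τ ∈ Aold, 2 ^ (sm.card + l - τ.1.card) := by
    rw [Finset.mul_sum]
    refine Finset.sum_congr rfl ?_
    intro τ hτ
    rw [hAold, Finset.mem_filter] at hτ
    have hc : τ.1.card ≤ sm.card + l := hτ.2
    have he : sm.card + (l + 1) - τ.1.card = (sm.card + l - τ.1.card) + 1 := by omega
    rw [he, pow_succ, mul_comm]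
  -- the new part
  have hnew1 : ∑ τ ∈ Anew, 2 ^ (sm.card + (l + 1) - τ.1.card) = Anew.card := by
    rw [Finset.card_eq_sum_ones Anew]
    refine Finset.sum_congr rfl ?_
    intro τ hτ
    rw [hAnew, Finset.mem_filter, mem_Alive Fam sm] at hτ
    have : sm.card + (l + 1) - τ.1.card = 0 := by omega
    rw [this, pow_zero]
  have hnew2 : Anew.card ≤ ∑ S' ∈ NewS, (hatF Fam S').card := by
    have hsub : Anew ⊆ NewS.biUnion (fun S' => (hatF Fam S').image (fun w => (S', w))) := by
      intro τ hτ
      rw [hAnew, Finset.mem_filter, mem_Alive Fam sm] at hτ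
      refine Finset.mem_biUnion.mpr ⟨τ.1, ?_, ?_⟩
      · rw [hNewS, Finset.mem_filter]
        exact ⟨hτ.1.1.1, by omega⟩
      · exact Finset.mem_image.mpr ⟨τ.2, hτ.1.1.2, Prod.mk.eta⟩
    calc Anew.card ≤ _ := Finset.card_le_card hsub
    _ ≤ ∑ S' ∈ NewS, ((hatF Fam S').image (fun w => (S', w))).card := Finset.card_biUnion_le
    _ ≤ ∑ S' ∈ NewS, (hatF Fam S').card :=
        Finset.sum_le_sum (fun S' _ => Finset.card_image_le)
  have hNewScard : ∀ S' ∈ NewS, S'.card = sm.card + l + 1 := by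
    intro S' hS'; rw [hNewS, Finset.mem_filter] at hS'; exact hS'.2
  have hNewSF : ∀ S' ∈ NewS, S' ∈ Fam.F := by
    intro S' hS'; rw [hNewS, Finset.mem_filter] at hS'; exact hS'.1
  have hNewSne : ∀ S' ∈ NewS, S' ≠ sm := by
    intro S' hS' h
    have := hNewScard S' hS'
    rw [h] at this; omega
  have hnew3 : ∑ S' ∈ NewS, (hatF Fam S').card
      ≤ ∑ S' ∈ NewS, ∑ w ∈ Bset Fam S', 2 ^ (S'.card - (pickU Fam S' w).card) :=
    Finset.sum_le_sum (fun S' hS' => charge_arith hIS (hNewSF S' hS') (hNewSne S' hS'))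
  have hpickcard : ∀ S' ∈ NewS, ∀ w ∈ Bset Fam S', (pickU Fam S' w).card < S'.card := by
    intro S' hS' w hw
    obtain ⟨hUF, _, hUS', _, _⟩ := pickU_spec hIS (hNewSF S' hS') hw
    exact hIS.SM _ hUF S' (hNewSF S' hS') hUS'
  have hnew4 : ∑ S' ∈ NewS, ∑ w ∈ Bset Fam S', 2 ^ (S'.card - (pickU Fam S' w).card)
      = 2 * ∑ S' ∈ NewS, ∑ w ∈ Bset Fam S', 2 ^ (sm.card + l - (pickU Fam S' w).card) := by
    rw [Finset.mul_sum]
    refine Finset.sum_congr rfl ?_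
    intro S' hS'
    rw [Finset.mul_sum]
    refine Finset.sum_congr rfl ?_
    intro w hw
    have h1 := hpickcard S' hS' w hw
    have h2 := hNewScard S' hS'
    have he : S'.card - (pickU Fam S' w).card = (sm.card + l - (pickU Fam S' w).card) + 1 := by
      omega
    rw [he, pow_succ, mul_comm]
  -- injection of charged tokens into Fresh
  have hfresh : ∑ S' ∈ NewS, ∑ w ∈ Bset Fam S', 2 ^ (sm.card + l - (pickU Fam S' w).card)
      ≤ ∑ τ ∈ Fresh, 2 ^ (sm.card + l - τ.1.card) := by
    rw [← Finset.sum_sigma NewS (fun S' => Bset Fam S')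
      (fun q => 2 ^ (sm.card + l - (pickU Fam q.1 q.2).card))]
    set t : (_ : Finset V) × V → Finset V × V := fun q => (pickU Fam q.1 q.2, q.2) with ht
    have hinj : ∀ q₁ ∈ NewS.sigma (fun S' => Bset Fam S'),
        ∀ q₂ ∈ NewS.sigma (fun S' => Bset Fam S'), t q₁ = t q₂ → q₁ = q₂ := by
      rintro ⟨a₁, b₁⟩ hq₁ ⟨a₂, b₂⟩ hq₂ heq
      rw [Finset.mem_sigma] at hq₁ hq₂
      obtain ⟨_, hw1, _, hwit1, _⟩ := pickU_spec hIS (hNewSF _ hq₁.1) hq₁.2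
      obtain ⟨hUF2, hw2, _, hwit2, _⟩ := pickU_spec hIS (hNewSF _ hq₂.1) hq₂.2
      have hw : b₁ = b₂ := congrArg Prod.snd heq
      have hU : pickU Fam a₁ b₁ = pickU Fam a₂ b₂ := congrArg Prod.fst heq
      subst hw
      rw [hU] at hwit1
      have hwU : b₁ ∈ pickU Fam a₂ b₁ := ((mem_hatF Fam).mp hw2).1
      have : a₁ = a₂ := hIS.SW _ hUF2 _ hwU _ _ hwit1 hwit2
      subst this
      rfl
    have himg : ∀ q ∈ NewS.sigma (fun S' => Bset Fam S'), t q ∈ Fresh := by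
      intro q hq
      rw [Finset.mem_sigma] at hq
      have hS'F := hNewSF _ hq.1
      have hS'card := hNewScard _ hq.1
      obtain ⟨hUF, hwhat, hUS', hwit, _⟩ := pickU_spec hIS hS'F hq.2
      have hwU : q.2 ∈ pickU Fam q.1 q.2 := ((mem_hatF Fam).mp hwhat).1
      have hUcard : (pickU Fam q.1 q.2).card < q.1.card := hIS.SM _ hUF _ hS'F hUS'
      have hwnS' : q.2 ∉ q.1 := ((mem_Bset Fam).mp hq.2).2
      rw [hFresh, Finset.mem_filter]
      constructor
      · refine (mem_Alive Fam sm).mpr ⟨⟨hUF, hwhat⟩,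
          show (pickU Fam q.1 q.2).card ≤ sm.card + l by omega, ?_⟩
        rintro ⟨K, hKF, hUK, hwK, hKc⟩
        obtain ⟨W, hWwit, _, hWc⟩ := witness_min hIS hUF hKF hUK hwK
        have hWq : W = q.1 := hIS.SW _ hUF _ hwU _ _ hWwit hwit
        rw [hWq] at hWc
        omega
      · exact ⟨q.1, hS'F, hUS', hwnS', by omega⟩
    have himage := Finset.sum_image (f := fun τ : Finset V × V => 2 ^ (sm.card + l - τ.1.card))
      (g := t) (s := NewS.sigma (fun S' => Bset Fam S')) hinj
    have hsub2 : (NewS.sigma (fun S' => Bset Fam S')).image t ⊆ Fresh := by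
      intro τ hτ
      obtain ⟨q, hq, hqt⟩ := Finset.mem_image.mp hτ
      exact hqt ▸ himg q hq
    calc ∑ q ∈ NewS.sigma (fun S' => Bset Fam S'), 2 ^ (sm.card + l - (pickU Fam q.1 q.2).card)
        = ∑ τ ∈ (NewS.sigma (fun S' => Bset Fam S')).image t, 2 ^ (sm.card + l - τ.1.card) :=
        himage.symm
    _ ≤ ∑ τ ∈ Fresh, 2 ^ (sm.card + l - τ.1.card) := Finset.sum_le_sum_of_subset hsub2
  omega


lemma Npot_zero : Npot Fam sm 0 ≤ sm.card := by
  classical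
  have h1 : ∀ τ ∈ Alive Fam sm 0, τ.1 = sm := by
    intro τ hτ
    rw [mem_Alive Fam sm] at hτ
    exact eq_sm_of_card_le hIS hτ.1.1 (by omega)
  have h2 : Npot Fam sm 0 = (Alive Fam sm 0).card := by
    rw [Npot, Finset.card_eq_sum_ones (Alive Fam sm 0)]
    refine Finset.sum_congr rfl ?_
    intro τ hτ
    have := h1 τ hτ
    have : sm.card + 0 - τ.1.card = 0 := by rw [this]; omega
    rw [this, pow_zero]
  rw [h2]
  refine Finset.card_le_card_of_injOn Prod.snd ?_ ?_
  · intro τ hτ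
    have hm := hτ
    rw [Finset.mem_coe, mem_Alive Fam sm] at hm
    have := ((mem_hatF Fam).mp hm.1.2).1
    rwa [h1 τ hτ] at this
  · intro a ha b hb h
    exact Prod.ext (by rw [h1 a (Finset.mem_coe.mp ha), h1 b (Finset.mem_coe.mp hb)]) h

lemma Npot_le (l : ℕ) : Npot Fam sm l ≤ 2 ^ l * sm.card := by
  induction l with
  | zero => rw [pow_zero, one_mul]; exact Npot_zero hIS
  | succ n ih =>
      calc Npot Fam sm (n + 1) ≤ 2 * Npot Fam sm n := Npot_succ hIS n
      _ ≤ 2 * (2 ^ n * sm.card) := by omega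
      _ = 2 ^ (n + 1) * sm.card := by ring

lemma DeadT_zero : DeadT Fam sm 0 = ∅ := by
  classical
  rw [Finset.eq_empty_iff_forall_notMem]
  intro τ hτ
  rw [mem_DeadT Fam sm] at hτ
  obtain ⟨⟨hUF, _⟩, K, hKF, hUK, _, hKc⟩ := hτ
  have hKsm : K = sm := eq_sm_of_card_le hIS hKF (by omega)
  have h1 := hIS.SM τ.1 hUF K hKF hUK
  have h2 := card_ge hIS hUF
  rw [hKsm] at h1
  omega

lemma DeadT_succ (x : ℕ) :
    (DeadT Fam sm (x + 1)).card ≤ (DeadT Fam sm x).card + Npot Fam sm x := by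
  classical
  set FreshX := (Alive Fam sm x).filter (fun τ => DeadP Fam sm (x + 1) τ) with hFX
  have hsub : DeadT Fam sm (x + 1) ⊆ DeadT Fam sm x ∪ FreshX := by
    intro τ hτ
    rw [mem_DeadT Fam sm] at hτ
    by_cases h : DeadP Fam sm x τ
    · exact Finset.mem_union_left _ ((mem_DeadT Fam sm).mpr ⟨hτ.1, h⟩)
    · refine Finset.mem_union_right _ ?_
      rw [hFX, Finset.mem_filter]
      obtain ⟨K, hKF, hUK, _, hKc⟩ := hτ.2
      have := hIS.SM τ.1 hτ.1.1 K hKF hUK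
      exact ⟨(mem_Alive Fam sm).mpr ⟨hτ.1, by omega, h⟩, hτ.2⟩
  have hFXcard : FreshX.card ≤ Npot Fam sm x := by
    calc FreshX.card = ∑ _τ ∈ FreshX, 1 := by rw [Finset.card_eq_sum_ones]
    _ ≤ ∑ τ ∈ FreshX, 2 ^ (sm.card + x - τ.1.card) :=
        Finset.sum_le_sum (fun τ _ => Nat.one_le_two_pow)
    _ ≤ Npot Fam sm x := Finset.sum_le_sum_of_subset (Finset.filter_subset _ _)
  calc (DeadT Fam sm (x + 1)).card ≤ (DeadT Fam sm x ∪ FreshX).card :=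
        Finset.card_le_card hsub
  _ ≤ (DeadT Fam sm x).card + FreshX.card := Finset.card_union_le _ _
  _ ≤ _ := by omega

lemma DeadT_le (x : ℕ) : (DeadT Fam sm x).card + sm.card ≤ 2 ^ x * sm.card := by
  induction x with
  | zero => rw [DeadT_zero hIS]; simp
  | succ n ih =>
      have h1 := DeadT_succ hIS (sm := sm) n
      have h2 := Npot_le hIS (sm := sm) n
      have h3 : 2 ^ (n + 1) * sm.card = 2 ^ n * sm.card + 2 ^ n * sm.card := by ring
      omega

/-- Injection of nontrivial low-excess members into dead tokens. -/
lemma count_injection [Nonempty V] (x : ℕ) :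
    ((Fam.F.filter (fun Z => Z.card ≤ sm.card + x)).erase sm).card
      ≤ (DeadT Fam sm x).card := by
  classical
  set f : Finset V → Finset V × V := fun S =>
    if h : ∃ w, w ∈ Bset Fam S then (pickU Fam S h.choose, h.choose)
    else (∅, Classical.arbitrary V) with hfdef
  have hprop : ∀ S ∈ (Fam.F.filter (fun Z => Z.card ≤ sm.card + x)).erase sm,
      (f S).1 ∈ Fam.F ∧ (f S).2 ∈ hatF Fam (f S).1 ∧ Fam.IsWitness (f S).1 (f S).2 S ∧
        Fam.prec (f S).1 S ∧ (f S).2 ∉ S := by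
    intro S hS
    obtain ⟨hSsm, hSf⟩ := Finset.mem_erase.mp hS
    rw [Finset.mem_filter] at hSf
    have hB : ∃ w, w ∈ Bset Fam S := Bset_nonempty hIS hSf.1 hSsm
    obtain ⟨hUF, hwhat, hUS, hwit, _⟩ := pickU_spec hIS hSf.1 hB.choose_spec
    have hwS : hB.choose ∉ S := ((mem_Bset Fam).mp hB.choose_spec).2
    rw [hfdef]
    simp only [dif_pos hB]
    exact ⟨hUF, hwhat, hwit, hUS, hwS⟩
  refine Finset.card_le_card_of_injOn f ?_ ?_
  · intro S hS
    obtain ⟨hUF, hwhat, hwit, hUS, hwS⟩ := hprop S hS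
    obtain ⟨hSsm, hSf⟩ := Finset.mem_erase.mp hS
    rw [Finset.mem_filter] at hSf
    exact (mem_DeadT Fam sm).mpr ⟨⟨hUF, hwhat⟩, S, hSf.1, hUS, hwS, hSf.2⟩
  · intro S₁ h1 S₂ h2 heq
    obtain ⟨hUF1, hwhat1, hwit1, _, _⟩ := hprop S₁ (Finset.mem_coe.mp h1)
    obtain ⟨hUF2, hwhat2, hwit2, _, _⟩ := hprop S₂ (Finset.mem_coe.mp h2)
    rw [heq] at hwit1
    have hwU : (f S₂).2 ∈ (f S₂).1 := ((mem_hatF Fam).mp hwhat2).1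
    exact hIS.SW _ hUF2 _ hwU _ _ hwit1 hwit2

end Steps

end ISP

open ISFamily in
/-- the number of principal elements of excess at most `x`
is at most `2^{x+1} · |sm(F)|`. -/
theorem principal_count_bound {V : Type*} [DecidableEq V] [Fintype V]
    (Fam : ISFamily V) (sm : Finset V) (hIS : Fam.IsIS sm) (x : ℕ) :
    {S | S ∈ Fam.F ∧ ex sm S ≤ x ∧ (Fam.hat S).Nonempty}.ncard ≤
      2 ^ (x + 1) * sm.card := by
  classical
  cases isEmpty_or_nonempty V with
  | inl hempty =>
      have : {S | S ∈ Fam.F ∧ ex sm S ≤ x ∧ (Fam.hat S).Nonempty} = ∅ := by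
        ext S
        simp only [Set.mem_setOf_eq, Set.mem_empty_iff_false, iff_false, not_and]
        intro _ _ h
        obtain ⟨v, _⟩ := h
        exact (hempty.false v).elim
      rw [this]
      simp
  | inr hne =>
  set ExS := Fam.F.filter (fun Z => Z.card ≤ sm.card + x) with hExS
  have htar : {S | S ∈ Fam.F ∧ ex sm S ≤ x ∧ (Fam.hat S).Nonempty} ⊆ ↑ExS := by
    intro S hS
    rw [Set.mem_setOf_eq] at hS
    have hex : S.card - sm.card ≤ x := hS.2.1
    exact Finset.mem_coe.mpr (Finset.mem_filter.mpr ⟨hS.1, by omega⟩)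
  have herase := ISP.count_injection hIS (sm := sm) x
  rw [← hExS] at herase
  have hdead := ISP.DeadT_le hIS (sm := sm) x
  by_cases hs : sm.card = 0
  · have htar' : {S | S ∈ Fam.F ∧ ex sm S ≤ x ∧ (Fam.hat S).Nonempty} ⊆ ↑(ExS.erase sm) := by
      intro S hS
      have hmem := htar hS
      rw [Set.mem_setOf_eq] at hS
      have hSsm : S ≠ sm := by
        rintro rfl
        obtain ⟨v, hv⟩ := hS.2.2
        have hv1 : v ∈ (↑S : Set V) := hv.1
        have hS0 : S = ∅ := Finset.card_eq_zero.mp hs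
        rw [hS0] at hv1
        simpa using hv1
      exact Finset.mem_coe.mpr (Finset.mem_erase.mpr ⟨hSsm, Finset.mem_coe.mp hmem⟩)
    calc {S | S ∈ Fam.F ∧ ex sm S ≤ x ∧ (Fam.hat S).Nonempty}.ncard
        ≤ (↑(ExS.erase sm) : Set (Finset V)).ncard :=
          Set.ncard_le_ncard htar' (ExS.erase sm).finite_toSet
    _ = (ExS.erase sm).card := Set.ncard_coe_finset _
    _ ≤ (ISP.DeadT Fam sm x).card := herase
    _ ≤ 2 ^ (x + 1) * sm.card := by
        rw [hs] at hdead
        simp only [Nat.mul_zero, Nat.add_zero] at hdead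
        omega
  · have hcard1 : ExS.card ≤ (ExS.erase sm).card + 1 := by
      by_cases hmem : sm ∈ ExS
      · rw [Finset.card_erase_of_mem hmem]
        have : 1 ≤ ExS.card := Finset.card_pos.mpr ⟨sm, hmem⟩
        omega
      · rw [Finset.erase_eq_of_notMem hmem]
        omega
    have hmain : {S | S ∈ Fam.F ∧ ex sm S ≤ x ∧ (Fam.hat S).Nonempty}.ncard ≤ ExS.card := by
      calc {S | S ∈ Fam.F ∧ ex sm S ≤ x ∧ (Fam.hat S).Nonempty}.ncard
          ≤ (↑ExS : Set (Finset V)).ncard := Set.ncard_le_ncard htar ExS.finite_toSet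
      _ = ExS.card := Set.ncard_coe_finset _
    have hpow : 2 ^ (x + 1) * sm.card = 2 ^ x * sm.card + 2 ^ x * sm.card := by ring
    have hsle : sm.card ≤ 2 ^ x * sm.card :=
      Nat.le_mul_of_pos_left sm.card (Nat.pow_pos (by norm_num))
    omega
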